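/- Let D be a database, Σ a set of primary keys, and define the blocks of D as above. Then the set of operational repairs of D with respect to Σ (results s(D) of complete repairing sequences s where each operation removes a nonempty subset F of a currently conflicting pair {f, g}) equals the set of all subsets D' ⊆ D such that for every block B of D: if |B| = 1 then B ⊆ D', and if |B| ≥ 2 then |D' ∩ B| ≤ 1. In particular, every consistent subset of D that contains all singleton blocks is an operational repair. -/

import Mathlib

/-- One repairing step: remove a nonempty subset `F` of a currently conflicting pair
`{f, g}` (two distinct facts of the same block). -/
def RepairStep {α β : Type} [DecidableEq α] (block : α → β) (D' D'' : Finset α) : Prop :=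
  ∃ (f g : α) (F : Finset α), f ∈ D' ∧ g ∈ D' ∧ f ≠ g ∧ block f = block g ∧
    F ⊆ ({f, g} : Finset α) ∧ F.Nonempty ∧ D'' = D' \ F

/-- Along a repairing sequence the result stays inside the original database and
every removed fact has a same-block partner in the original database. -/
lemma repair_subset_partner {α β : Type} [DecidableEq α] (block : α → β)
    {D D'' : Finset α} (h : Relation.ReflTransGen (RepairStep block) D D'') :
    D'' ⊆ D ∧ ∀ x ∈ D, x ∉ D'' → ∃ y ∈ D, y ≠ x ∧ block y = block x := by
  induction h with
  | refl => exact ⟨subset_rfl, fun x hx hx' => absurd hx hx'⟩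
  | @tail b c _ hstep ih =>
    obtain ⟨hsub, hpart⟩ := ih
    obtain ⟨f, g, F, hf, hg, hfg, hb, hFsub, _, rfl⟩ := hstep
    refine ⟨(Finset.sdiff_subset).trans hsub, ?_⟩
    intro x hx hx'
    by_cases hxb : x ∈ b
    · have hxF : x ∈ F := by
        by_contra hxF
        exact hx' (Finset.mem_sdiff.mpr ⟨hxb, hxF⟩)
      have := hFsub hxF
      rcases Finset.mem_insert.mp this with rfl | hxg
      · exact ⟨g, hsub hg, fun h => hfg h.symm, hb.symm⟩
      · rcases Finset.mem_singleton.mp hxg with rfl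
        exact ⟨f, hsub hf, hfg, hb⟩
    · exact hpart x hx hxb

/-- From a configuration `D₁` containing `D''` in which every fact outside `D''`
has a same-block partner, one can reach the consistent `D''` by repairing steps. -/
lemma reach {α β : Type} [DecidableEq α] [DecidableEq β] (block : α → β) (D'' : Finset α) :
    ∀ n (D₁ : Finset α), (D₁ \ D'').card ≤ n → D'' ⊆ D₁ →
    (∀ x ∈ D₁, x ∉ D'' → ∃ y ∈ D₁, y ≠ x ∧ block y = block x) →
    Relation.ReflTransGen (RepairStep block) D₁ D'' := by
  intro n
  induction n with
  | zero =>
    intro D₁ hcard hsub _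
    have h0 : D₁ \ D'' = ∅ := Finset.card_eq_zero.mp (le_antisymm hcard (Nat.zero_le _))
    have : D₁ = D'' := by
      apply subset_antisymm _ hsub
      intro x hx
      by_contra hx'
      exact absurd (Finset.mem_sdiff.mpr ⟨hx, hx'⟩) (h0 ▸ Finset.notMem_empty x)
    rw [this]
  | succ n ih =>
    intro D₁ hcard hsub hinv
    by_cases heq : D₁ = D''
    · rw [heq]
    · have hne : (D₁ \ D'').Nonempty := by
        rw [Finset.nonempty_iff_ne_empty]
        intro h
        apply heq
        apply subset_antisymm _ hsub
        intro x hx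
        by_contra hx'
        exact absurd (Finset.mem_sdiff.mpr ⟨hx, hx'⟩) (h ▸ Finset.notMem_empty x)
      obtain ⟨f, hf⟩ := hne
      rw [Finset.mem_sdiff] at hf
      obtain ⟨hfD, hfD''⟩ := hf
      obtain ⟨y, hyD, hyf, hyb⟩ := hinv f hfD hfD''
      have hcard1 : ((D₁ \ {f}) \ D'').card ≤ n := by
        have hsdiff : (D₁ \ {f}) \ D'' ⊆ (D₁ \ D'').erase f := by
          intro x hx
          simp only [Finset.mem_sdiff, Finset.mem_singleton, Finset.mem_erase] at hx ⊢
          tauto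
        have := (Finset.card_le_card hsdiff).trans
          (le_of_eq (Finset.card_erase_of_mem (Finset.mem_sdiff.mpr ⟨hfD, hfD''⟩)))
        omega
      by_cases hA : ∃ g ∈ D'', block g = block f
      · obtain ⟨g, hgD'', hgb⟩ := hA
        have hgf : f ≠ g := fun h => hfD'' (h ▸ hgD'')
        have hstep : RepairStep block D₁ (D₁ \ {f}) :=
          ⟨f, g, {f}, hfD, hsub hgD'', hgf, hgb.symm,
            Finset.singleton_subset_iff.mpr (Finset.mem_insert_self f {g}),
            Finset.singleton_nonempty f, rfl⟩
        refine Relation.ReflTransGen.head hstep (ih _ hcard1 ?_ ?_)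
        · intro x hx
          exact Finset.mem_sdiff.mpr ⟨hsub hx, by
            simp only [Finset.mem_singleton]; rintro rfl; exact hfD'' hx⟩
        · intro x hx hx'
          rw [Finset.mem_sdiff, Finset.mem_singleton] at hx
          obtain ⟨hxD, hxf⟩ := hx
          obtain ⟨y', hy'D, hy'x, hy'b⟩ := hinv x hxD hx'
          by_cases hy'f : y' = f
          · subst hy'f
            refine ⟨g, Finset.mem_sdiff.mpr ⟨hsub hgD'', ?_⟩, ?_, hgb.trans hy'b⟩
            · simp only [Finset.mem_singleton]; rintro rfl; exact hfD'' hgD''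
            · rintro rfl; exact hx' hgD''
          · exact ⟨y', Finset.mem_sdiff.mpr ⟨hy'D, by simpa using hy'f⟩, hy'x, hy'b⟩
      · push_neg at hA
        have hyD'' : y ∉ D'' := fun h => hA y h hyb
        by_cases hC : ∃ h ∈ D₁, h ≠ f ∧ h ≠ y ∧ block h = block f
        · -- third element exists: remove only f
          obtain ⟨t, htD, htf, hty, htb⟩ := hC
          have hstep : RepairStep block D₁ (D₁ \ {f}) :=
            ⟨f, y, {f}, hfD, hyD, fun h => hyf h.symm, hyb.symm,
              Finset.singleton_subset_iff.mpr (Finset.mem_insert_self f {y}),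
              Finset.singleton_nonempty f, rfl⟩
          refine Relation.ReflTransGen.head hstep (ih _ hcard1 ?_ ?_)
          · intro x hx
            exact Finset.mem_sdiff.mpr ⟨hsub hx, by
              simp only [Finset.mem_singleton]; rintro rfl; exact hfD'' hx⟩
          · intro x hx hx'
            rw [Finset.mem_sdiff, Finset.mem_singleton] at hx
            obtain ⟨hxD, hxf⟩ := hx
            obtain ⟨y', hy'D, hy'x, hy'b⟩ := hinv x hxD hx'
            by_cases hy'f : y' = f
            · subst hy'f
              by_cases hyx : y = x
              · exact ⟨t, Finset.mem_sdiff.mpr ⟨htD, by simpa using htf⟩,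
                  hyx ▸ hty, htb.trans hy'b⟩
              · exact ⟨y, Finset.mem_sdiff.mpr ⟨hyD, by simpa using hyf⟩,
                  hyx, hyb.trans hy'b⟩
            · exact ⟨y', Finset.mem_sdiff.mpr ⟨hy'D, by simpa using hy'f⟩, hy'x, hy'b⟩
        · -- block is exactly {f, y}; remove both
          push_neg at hC
          have hstep : RepairStep block D₁ (D₁ \ {f, y}) :=
            ⟨f, y, {f, y}, hfD, hyD, fun h => hyf h.symm, hyb.symm,
              subset_rfl, ⟨f, Finset.mem_insert_self f {y}⟩, rfl⟩
          have hcard2 : ((D₁ \ {f, y}) \ D'').card ≤ n := by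
            have hsdiff : (D₁ \ {f, y}) \ D'' ⊆ (D₁ \ D'').erase f := by
              intro x hx
              simp only [Finset.mem_sdiff, Finset.mem_insert, Finset.mem_singleton,
                Finset.mem_erase, not_or] at hx ⊢
              tauto
            have := (Finset.card_le_card hsdiff).trans
              (le_of_eq (Finset.card_erase_of_mem (Finset.mem_sdiff.mpr ⟨hfD, hfD''⟩)))
            omega
          refine Relation.ReflTransGen.head hstep (ih _ hcard2 ?_ ?_)
          · intro x hx
            refine Finset.mem_sdiff.mpr ⟨hsub hx, ?_⟩
            simp only [Finset.mem_insert, Finset.mem_singleton, not_or]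
            constructor
            · rintro rfl; exact hfD'' hx
            · rintro rfl; exact hyD'' hx
          · intro x hx hx'
            rw [Finset.mem_sdiff, Finset.mem_insert, Finset.mem_singleton, not_or] at hx
            obtain ⟨hxD, hxf, hxy⟩ := hx
            obtain ⟨y', hy'D, hy'x, hy'b⟩ := hinv x hxD hx'
            have hy'ne : y' ≠ f ∧ y' ≠ y := by
              constructor
              · rintro rfl
                exact hC x hxD hxf hxy hy'b.symm
              · rintro rfl
                exact hC x hxD hxf hxy (hy'b.symm.trans hyb)
            refine ⟨y', Finset.mem_sdiff.mpr ⟨hy'D, ?_⟩, hy'x, hy'b⟩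
            simp only [Finset.mem_insert, Finset.mem_singleton, not_or]
            exact hy'ne

theorem stmt_14 {α β : Type} [DecidableEq α] [DecidableEq β]
    (block : α → β) (D D'' : Finset α) :
    (Relation.ReflTransGen (RepairStep block) D D'' ∧
        ∀ f ∈ D'', ∀ g ∈ D'', block f = block g → f = g) ↔
    (D'' ⊆ D ∧ ∀ b : β,
      ((D.filter (fun x => block x = b)).card = 1 →
        D.filter (fun x => block x = b) ⊆ D'') ∧
      (2 ≤ (D.filter (fun x => block x = b)).card →
        (D''.filter (fun x => block x = b)).card ≤ 1)) := by
  constructor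
  · rintro ⟨hrt, hcons⟩
    obtain ⟨hsub, hpart⟩ := repair_subset_partner block hrt
    refine ⟨hsub, fun b => ⟨?_, fun _ => ?_⟩⟩
    · intro h1 x hx
      rw [Finset.mem_filter] at hx
      by_contra hx'
      obtain ⟨y, hyD, hyx, hyb⟩ := hpart x hx.1 hx'
      have hy : y ∈ D.filter (fun x => block x = b) :=
        Finset.mem_filter.mpr ⟨hyD, hyb.trans hx.2⟩
      have := Finset.one_lt_card.mpr ⟨y, hy, x, Finset.mem_filter.mpr hx, hyx⟩
      omega
    · apply Finset.card_le_one.mpr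
      intro a ha c hc
      rw [Finset.mem_filter] at ha hc
      exact hcons a ha.1 c hc.1 (ha.2.trans hc.2.symm)
  · rintro ⟨hsub, hblocks⟩
    have hcons : ∀ f ∈ D'', ∀ g ∈ D'', block f = block g → f = g := by
      intro f hf g hg hb
      set b := block f with hbdef
      have hfm : f ∈ D.filter (fun x => block x = b) :=
        Finset.mem_filter.mpr ⟨hsub hf, rfl⟩
      have hgm : g ∈ D.filter (fun x => block x = b) :=
        Finset.mem_filter.mpr ⟨hsub hg, hb.symm⟩
      by_cases h2 : 2 ≤ (D.filter (fun x => block x = b)).card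
      · have := (hblocks b).2 h2
        exact Finset.card_le_one.mp this f
          (Finset.mem_filter.mpr ⟨hf, rfl⟩) g (Finset.mem_filter.mpr ⟨hg, hb.symm⟩)
      · have : (D.filter (fun x => block x = b)).card ≤ 1 := by omega
        exact Finset.card_le_one.mp this f hfm g hgm
    refine ⟨?_, hcons⟩
    apply reach block D'' (D \ D'').card D le_rfl hsub
    intro x hx hx'
    set b := block x with hbdef
    have hxm : x ∈ D.filter (fun z => block z = b) :=
      Finset.mem_filter.mpr ⟨hx, rfl⟩
    have h1 : (D.filter (fun z => block z = b)).card ≠ 1 := by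
      intro h1
      exact hx' ((hblocks b).1 h1 hxm)
    have hpos : 1 ≤ (D.filter (fun z => block z = b)).card :=
      Finset.card_pos.mpr ⟨x, hxm⟩
    have h2 : 1 < (D.filter (fun z => block z = b)).card := by omega
    obtain ⟨y, hy, hyx⟩ := Finset.exists_mem_ne h2 x
    rw [Finset.mem_filter] at hy
    exact ⟨y, hy.1, hyx, hy.2⟩
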